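/- Let v be a vertex with incident edge set ∂(v), downward-closed probing constraint C_v, and a distribution (x(e))_{e ∈ C_v} with x(e) ≥ 0 and Σ_{e ∈ C_v} x(e) = 1. Define, for each edge f ∈ ∂(v), the induced edge variable x̃_f := Σ_{e' ∈ C_v : f ∈ e'} g(e'_{<f}) · x(e'), where g(e'_{<f}) is the product of (1 - p_{e}) over the edges of e' strictly preceding f. If VertexProbe samples e' ∈ C_v with probability x(e'), probes its edges in order (each edge f being independently active with probability p_f), and returns the first active edge, then each edge f ∈ ∂(v) is returned with probability exactly p_f · x̃_f. -/

import Mathlib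

open scoped Classical

lemma sum_pi_bool' {E : Type} [DecidableEq E] [Fintype E] (h : E → Bool → ℝ) :
    ∑ ω : E → Bool, ∏ e, h e (ω e) = ∏ e, (h e true + h e false) := by
  have : ∀ e : E, h e true + h e false = ∑ b : Bool, h e b := by
    intro e; simp
  simp only [this]
  rw [Finset.prod_univ_sum]
  apply Finset.sum_congr
  · ext ω; simp [Fintype.mem_piFinset]
  · intros; rfl

lemma find?_char' {E : Type} [DecidableEq E] (ω : E → Bool) (f : E) :
    ∀ l : List E, (l.find? (fun e => ω e) = some f ↔
      (f ∈ l ∧ ω f = true ∧ ∀ e ∈ l.takeWhile (fun e => e ≠ f), ω e = false))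
  | [] => by simp
  | a :: t => by
    by_cases ha : ω a = true
    · rw [List.find?_cons_of_pos (p := fun e => ω e) (a := a) (l := t) (by simpa using ha)]
      by_cases haf : a = f
      · subst haf
        simp [ha]
      · constructor
        · intro h; simp at h; exact absurd h haf
        · rintro ⟨hf, hωf, hall⟩
          have hmem : a ∈ (a::t).takeWhile (fun e => e ≠ f) := by
            rw [List.takeWhile_cons_of_pos (by simp [haf])]
            exact List.mem_cons_self
          have := hall a hmem
          rw [ha] at this; exact absurd this (by simp)
    · rw [List.find?_cons_of_neg (p := fun e => ω e) (a := a) (l := t) (by simpa using ha)]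
      rw [find?_char' ω f t]
      by_cases haf : a = f
      · subst haf
        constructor
        · rintro ⟨_, hωf, _⟩; rw [hωf] at ha; exact absurd rfl ha
        · rintro ⟨_, hωf, _⟩; rw [hωf] at ha; exact absurd rfl ha
      · have htw : (a::t).takeWhile (fun e => e ≠ f) = a :: t.takeWhile (fun e => e ≠ f) :=
          List.takeWhile_cons_of_pos (by simp [haf])
        rw [htw]
        constructor
        · rintro ⟨hf, hωf, hall⟩
          refine ⟨List.mem_cons_of_mem _ hf, hωf, ?_⟩
          intro e he
          rcases List.mem_cons.1 he with rfl | he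
          · simpa using ha
          · exact hall e he
        · rintro ⟨hf, hωf, hall⟩
          refine ⟨?_, hωf, fun e he => hall e (List.mem_cons_of_mem _ he)⟩
          rcases List.mem_cons.1 hf with rfl | hf
          · exact absurd rfl haf
          · exact hf

lemma inner_sum2' {E : Type} [Fintype E] [DecidableEq E] (p : E → ℝ) (f : E)
    (l : List E) (hl : l.Nodup) :
    (∑ ω : E → Bool,
        (∏ e, if ω e then p e else 1 - p e) *
          (if l.find? (fun e => ω e) = some f then 1 else 0))
    = if f ∈ l then p f * ((l.takeWhile fun e => e ≠ f).map fun e => 1 - p e).prod else 0 := by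
  have find?_char : ∀ (ω : E → Bool), (l.find? (fun e => ω e) = some f ↔
      (f ∈ l ∧ ω f = true ∧ ∀ e ∈ l.takeWhile (fun e => e ≠ f), ω e = false)) :=
    fun ω => find?_char' ω f l
  by_cases hf : f ∈ l
  · rw [if_pos hf]
    set t := l.takeWhile (fun e => e ≠ f) with ht
    set T := t.toFinset with hT
    have hmemt : ∀ e ∈ T, e ≠ f := by
      intro e he
      have := List.mem_takeWhile_imp (List.mem_toFinset.1 he)
      simpa using this
    have hfT : f ∉ T := fun h => hmemt f h rfl
    have key : ∀ ω : E → Bool,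
        (∏ e, if ω e then p e else 1 - p e) *
          (if l.find? (fun e => ω e) = some f then 1 else 0)
        = ∏ e, ((fun e b => (if b then p e else 1 - p e) *
            (if e = f then (if b then (1:ℝ) else 0)
             else if e ∈ T then (if b then 0 else 1) else 1)) e (ω e)) := by
      intro ω
      simp only
      rw [Finset.prod_mul_distrib]
      congr 1
      by_cases hfind : l.find? (fun e => ω e) = some f
      · rw [if_pos hfind]
        obtain ⟨-, hωf, hall⟩ := (find?_char ω).1 hfind
        rw [eq_comm]
        apply Finset.prod_eq_one
        intro e _
        by_cases hef : e = f
        · subst hef; simp [hωf]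
        · by_cases heT : e ∈ T
          · have := hall e (List.mem_toFinset.1 heT)
            simp [hef, heT, this]
          · simp [hef, heT]
      · rw [if_neg hfind, eq_comm]
        rw [(not_iff_not.2 (find?_char ω))] at hfind
        push_neg at hfind
        by_cases hωf : ω f = true
        · obtain ⟨e, he, hωe⟩ := hfind hf hωf
          refine Finset.prod_eq_zero (Finset.mem_univ e) ?_
          have heT : e ∈ T := List.mem_toFinset.2 he
          have hef : e ≠ f := hmemt e heT
          have hωe' : ω e = true := by simpa using hωe
          simp [hef, heT, hωe']
        · refine Finset.prod_eq_zero (Finset.mem_univ f) ?_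
          simp [hωf]
    simp only [key]
    have hsum := sum_pi_bool' (fun e b => (if b then p e else 1 - p e) *
            (if e = f then (if b then (1:ℝ) else 0)
             else if e ∈ T then (if b then 0 else 1) else 1))
    refine hsum.trans ?_
    have step : (∏ e : E, ((fun e b => (if b then p e else 1 - p e) *
            (if e = f then (if b then (1:ℝ) else 0)
             else if e ∈ T then (if b then 0 else 1) else 1)) e true
        + (fun e b => (if b then p e else 1 - p e) *
            (if e = f then (if b then (1:ℝ) else 0)
             else if e ∈ T then (if b then 0 else 1) else 1)) e false))
        = ∏ e : E, (if e = f then p e else if e ∈ T then 1 - p e else 1) := by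
      apply Finset.prod_congr rfl
      intro e _
      by_cases hef : e = f <;> by_cases heT : e ∈ T <;> simp [hef, heT]
    refine step.trans ?_
    rw [← Finset.mul_prod_erase Finset.univ _ (Finset.mem_univ f)]
    rw [if_pos rfl]
    congr 1
    have : ∀ e ∈ Finset.univ.erase f,
        (if e = f then p e else if e ∈ T then 1 - p e else 1)
        = if e ∈ T then 1 - p e else 1 := by
      intro e he
      rw [if_neg (Finset.mem_erase.1 he).1]
    rw [Finset.prod_congr rfl this, Finset.prod_ite_mem]
    have hinter : (Finset.univ.erase f) ∩ T = T := by
      ext e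
      simp only [Finset.mem_inter, Finset.mem_erase, Finset.mem_univ, and_true, true_and]
      exact ⟨fun h => h.2, fun h => ⟨hmemt e h, h⟩⟩
    rw [hinter, hT]
    rw [List.prod_toFinset _ (hl.sublist (List.takeWhile_sublist _))]
  · rw [if_neg hf]
    apply Finset.sum_eq_zero
    intro ω _
    rw [if_neg, mul_zero]
    intro h
    exact hf ((find?_char ω).1 h).1

/-- Lemma 2.1, VertexProbe: sample a tuple `l ∈ C` with probability `x l`,
probe its edges in order (edge `e` independently active with probability `p e`, states
`ω : E → Bool`), and return the first active edge (`l.find? ω`).  Then a fixed edge `f`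
is returned with probability exactly `p f · x̃_f`, where
`x̃_f = Σ_{l ∈ C, f ∈ l} g(l_{<f}) · x l` and `g(l_{<f})` is the product of `(1 - p e)`
over the edges of `l` strictly preceding `f`. -/
theorem vertexProbe_returns_edge_prob
    (E : Type) [Fintype E] [DecidableEq E] (C : Finset (List E))
    (p : E → ℝ) (hp : ∀ e, p e ∈ Set.Icc (0 : ℝ) 1)
    (hnodup : ∀ l ∈ C, l.Nodup)
    (x : List E → ℝ) (hx : ∀ l ∈ C, 0 ≤ x l) (hx1 : ∑ l ∈ C, x l = 1)
    (f : E) :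
    (∑ l ∈ C, x l *
      ∑ ω : E → Bool,
        (∏ e, if ω e then p e else 1 - p e) *
          (if l.find? (fun e => ω e) = some f then 1 else 0))
    = p f *
        ∑ l ∈ C.filter (fun l => f ∈ l),
          ((l.takeWhile fun e => e ≠ f).map fun e => 1 - p e).prod * x l := by
  rw [Finset.mul_sum, Finset.sum_filter]
  apply Finset.sum_congr rfl
  intro l hl
  rw [inner_sum2' p f l (hnodup l hl)]
  by_cases hf : f ∈ l
  · rw [if_pos hf, if_pos hf]; ring
  · rw [if_neg hf, if_neg hf, mul_zero]
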